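/- The hyperspace F(𝔈_c) of all nonempty finite subsets of complete Erdős space, with the Vietoris topology, is of the first category in itself (meager in itself), and consequently F(𝔈_c) is not homeomorphic to 𝔈_c. -/

import Mathlib

open Set Topology

noncomputable section

/-- The Vietoris topology on the powerset of `X` induced by a topology `τ`,
generated by the sets `{F | F ⊆ U}` and `{F | F ∩ U ≠ ∅}` for `U` a nonempty `τ`-open set. -/
def VietorisTop {X : Type*} (τ : TopologicalSpace X) : TopologicalSpace (Set X) :=
  TopologicalSpace.generateFrom
    ({S : Set (Set X) | ∃ U : Set X, IsOpen[τ] U ∧ U.Nonempty ∧ S = {F : Set X | F ⊆ U}} ∪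
     {S : Set (Set X) | ∃ U : Set X, IsOpen[τ] U ∧ U.Nonempty ∧ S = {F : Set X | (F ∩ U).Nonempty}})

/-- The hyperspace `K(X)` of nonempty compact subsets of `X`. -/
def HypK (X : Type*) [TopologicalSpace X] : Type _ := {F : Set X // F.Nonempty ∧ IsCompact F}

/-- `K(X)` carries the Vietoris topology. -/
instance (X : Type*) [τ : TopologicalSpace X] : TopologicalSpace (HypK X) :=
  (VietorisTop τ).induced Subtype.val

/-- The `n`-th symmetric product `F_n(X)`: nonempty subsets of `X` with at most `n` points. -/
def HypFn (n : ℕ) (X : Type*) [TopologicalSpace X] : Type _ :=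
  {F : Set X // F.Nonempty ∧ F.Finite ∧ F.ncard ≤ n}

/-- `F_n(X)` carries the Vietoris topology. -/
instance (n : ℕ) (X : Type*) [τ : TopologicalSpace X] : TopologicalSpace (HypFn n X) :=
  (VietorisTop τ).induced Subtype.val

/-- The hyperspace `F(X)` of nonempty finite subsets of `X`. -/
def HypFin (X : Type*) [TopologicalSpace X] : Type _ := {F : Set X // F.Nonempty ∧ F.Finite}

/-- `F(X)` carries the Vietoris topology. -/
instance (X : Type*) [τ : TopologicalSpace X] : TopologicalSpace (HypFin X) :=
  (VietorisTop τ).induced Subtype.val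

/-- A space is almost zero-dimensional if every point has a neighborhood basis consisting of
sets each of which is an intersection of clopen sets. -/
def IsAZD (X : Type*) [TopologicalSpace X] : Prop :=
  ∀ x : X, ∀ U ∈ nhds x, ∃ V ∈ nhds x, V ⊆ U ∧
    ∃ C : Set (Set X), (∀ c ∈ C, IsClopen c) ∧ V = ⋂₀ C

/-- `X` is `𝒜`-cohesive: every point has a neighborhood containing no nonempty proper
subset of an element `A ∈ 𝒜` that is clopen in the subspace topology of `A`. -/
def CohesiveWrt (X : Type*) [TopologicalSpace X] (𝒜 : Set (Set X)) : Prop :=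
  ∀ x : X, ∃ U ∈ nhds x, ∀ A ∈ 𝒜, ∀ C : Set X,
    C ⊆ U → C ⊆ A → C.Nonempty → C ≠ A → ¬ IsClopen {y : A | (y : X) ∈ C}

/-- A space is cohesive if it is `{X}`-cohesive. -/
def Cohesive (X : Type*) [TopologicalSpace X] : Prop := CohesiveWrt X {Set.univ}

/-- Erdős space: the rational points of the Hilbert space `ℓ²`. -/
def ErdosSpace : Type :=
  {x : lp (fun _ : ℕ => ℝ) 2 // ∀ n : ℕ, ∃ q : ℚ, x.val n = (q : ℝ)}

instance : TopologicalSpace ErdosSpace := by unfold ErdosSpace; infer_instance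

/-- Complete Erdős space: points of `ℓ²` all of whose coordinates lie in `{0} ∪ {1/m : m ≥ 1}`. -/
def CompleteErdosSpace : Type :=
  {x : lp (fun _ : ℕ => ℝ) 2 // ∀ n : ℕ, x.val n = 0 ∨ ∃ m : ℕ, 0 < m ∧ x.val n = 1 / (m : ℝ)}

instance : TopologicalSpace CompleteErdosSpace := by unfold CompleteErdosSpace; infer_instance

section CESAux
open scoped ENNReal NNReal

instance : T2Space CompleteErdosSpace :=
  .of_injective_continuous Subtype.val_injective continuous_subtype_val

lemma cont_eval (n : ℕ) : Continuous fun x : lp (fun _ : ℕ => ℝ) 2 => x n := by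
  refine (LipschitzWith.of_dist_le_mul (K := 1) fun x y => ?_).continuous
  rw [NNReal.coe_one, one_mul, dist_eq_norm, dist_eq_norm]
  simpa [lp.coeFn_sub] using lp.norm_apply_le_norm (by norm_num) (x - y) n

lemma S_closed : IsClosed {y : ℝ | y = 0 ∨ ∃ m : ℕ, 0 < m ∧ y = 1 / (m : ℝ)} := by
  have ht : Filter.Tendsto (fun k : ℕ => 1 / ((k : ℝ) + 1)) Filter.atTop (nhds 0) := by
    simpa using tendsto_one_div_add_atTop_nhds_zero_nat (𝕜 := ℝ)
  have hc := ht.isCompact_insert_range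
  have : {y : ℝ | y = 0 ∨ ∃ m : ℕ, 0 < m ∧ y = 1 / (m : ℝ)}
      = insert 0 (Set.range fun k : ℕ => 1 / ((k : ℝ) + 1)) := by
    ext y
    simp only [mem_setOf_eq, mem_insert_iff, mem_range]
    constructor
    · rintro (rfl | ⟨m, hm, rfl⟩)
      · exact Or.inl rfl
      · exact Or.inr ⟨m - 1, by rw [Nat.cast_sub hm]; push_cast; ring_nf⟩
    · rintro (rfl | ⟨k, rfl⟩)
      · exact Or.inl rfl
      · exact Or.inr ⟨k + 1, k.succ_pos, by push_cast; ring⟩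
  rw [this]
  exact hc.isClosed

lemma ces_closed : IsClosed {x : lp (fun _ : ℕ => ℝ) 2 |
    ∀ n : ℕ, x.val n = 0 ∨ ∃ m : ℕ, 0 < m ∧ x.val n = 1 / (m : ℝ)} := by
  have : {x : lp (fun _ : ℕ => ℝ) 2 | ∀ n : ℕ, x.val n = 0 ∨ ∃ m : ℕ, 0 < m ∧ x.val n = 1/(m:ℝ)}
      = ⋂ n : ℕ, (fun x : lp (fun _ : ℕ => ℝ) 2 => x n) ⁻¹'
        {y : ℝ | y = 0 ∨ ∃ m : ℕ, 0 < m ∧ y = 1 / (m : ℝ)} := by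
    ext x; simp only [Set.mem_iInter, Set.mem_preimage, Set.mem_setOf_eq]
  rw [this]
  exact isClosed_iInter fun n => S_closed.preimage (cont_eval n)

set_option synthInstance.maxHeartbeats 1000000 in
instance : BaireSpace CompleteErdosSpace := by
  unfold CompleteErdosSpace
  haveI : CompleteSpace {x : lp (fun _ : ℕ => ℝ) 2 //
      ∀ n : ℕ, x.val n = 0 ∨ ∃ m : ℕ, 0 < m ∧ x.val n = 1 / (m : ℝ)} :=
    ces_closed.completeSpace_coe
  exact BaireSpace.of_completelyPseudoMetrizable

instance : Nonempty CompleteErdosSpace :=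
  ⟨⟨0, fun n => Or.inl rfl⟩⟩

lemma ces_open_infinite {U : Set CompleteErdosSpace} (hU : IsOpen U) (hne : U.Nonempty) :
    U.Infinite := by
  obtain ⟨x, hx⟩ := hne
  obtain ⟨V, hV, hVU⟩ := isOpen_induced_iff.mp hU
  have hxV : (x.val : lp (fun _ : ℕ => ℝ) 2) ∈ V := by
    rw [← hVU] at hx; exact hx
  obtain ⟨ε, hε, hball⟩ := Metric.isOpen_iff.mp hV _ hxV
  have hε3 : 0 < ε / 3 := by linarith
  -- find a coordinate with small value
  have hsum : Summable fun i => ‖(x.val : lp (fun _ : ℕ => ℝ) 2) i‖ ^ (2 : ℝ≥0∞).toReal :=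
    (lp.memℓp x.val).summable (by norm_num)
  have htend := hsum.tendsto_atTop_zero
  have hδ : (0:ℝ) < (ε/3) ^ (2 : ℝ≥0∞).toReal := by
    apply Real.rpow_pos_of_pos hε3
  obtain ⟨k, hk⟩ := (htend.eventually (gt_mem_nhds hδ)).exists
  have hxk : ‖(x.val : lp (fun _ : ℕ => ℝ) 2) k‖ < ε / 3 := by
    have h2 : ((2 : ℝ≥0∞).toReal) = ((2:ℕ):ℝ) := by norm_num
    rw [h2, Real.rpow_natCast, Real.rpow_natCast] at hk
    exact lt_of_pow_lt_pow_left₀ 2 hε3.le hk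
  obtain ⟨M, hM⟩ := exists_nat_one_div_lt hε3
  -- the family of perturbed points
  have key : ∀ j : ℕ, ∃ z : CompleteErdosSpace, z ∈ U ∧
      (z.val : lp (fun _ : ℕ => ℝ) 2) k = 1 / ((M + j + 1 : ℕ) : ℝ) := by
    intro j
    set c : ℝ := 1 / ((M + j + 1 : ℕ) : ℝ) - (x.val : lp (fun _ : ℕ => ℝ) 2) k with hc
    set y : lp (fun _ : ℕ => ℝ) 2 := x.val + lp.single 2 k c with hy
    have hyk : (y : ∀ _ : ℕ, ℝ) k = 1 / ((M + j + 1 : ℕ) : ℝ) := by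
      rw [hy, lp.coeFn_add, Pi.add_apply, lp.single_apply_self, hc]; ring
    have hyn : ∀ n : ℕ, n ≠ k → (y : ∀ _ : ℕ, ℝ) n = (x.val : ∀ _ : ℕ, ℝ) n := by
      intro n hn
      rw [hy, lp.coeFn_add, Pi.add_apply, lp.single_apply_ne 2 k _ hn, add_zero]
    have hprop : ∀ n : ℕ, y.val n = 0 ∨ ∃ m : ℕ, 0 < m ∧ y.val n = 1 / (m : ℝ) := by
      intro n
      by_cases hn : n = k
      · subst hn
        exact Or.inr ⟨M + j + 1, by omega, hyk⟩
      · rw [show y.val n = (x.val : ∀ _ : ℕ, ℝ) n from hyn n hn]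
        exact x.property n
    refine ⟨⟨y, hprop⟩, ?_, hyk⟩
    have hnorm : ‖lp.single (E := fun _ : ℕ => ℝ) 2 k c‖ = |c| := by
      have := lp.norm_single (E := fun _ : ℕ => ℝ) (p := 2) (by norm_num) k c
      simpa [Real.norm_eq_abs] using this
    have hdist : dist y x.val < ε := by
      rw [dist_eq_norm, hy, add_sub_cancel_left, hnorm, hc]
      have h1 : (1:ℝ) / ((M + j + 1 : ℕ) : ℝ) ≤ 1 / ((M:ℝ) + 1) := by
        apply one_div_le_one_div_of_le
        · positivity
        · push_cast; linarith
      have h2 : (0:ℝ) < 1 / ((M + j + 1 : ℕ) : ℝ) := by positivity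
      rw [abs_sub_lt_iff]
      constructor
      · have := abs_nonneg ((x.val : ∀ _ : ℕ, ℝ) k)
        have hb : -(ε/3) < (x.val : ∀ _ : ℕ, ℝ) k := by
          have := (abs_lt.mp (by simpa [Real.norm_eq_abs] using hxk)).1; linarith
        linarith
      · have ha : (x.val : ∀ _ : ℕ, ℝ) k < ε/3 :=
          (abs_lt.mp (by simpa [Real.norm_eq_abs] using hxk)).2
        linarith
    have : y ∈ V := hball (by simpa [Metric.mem_ball] using hdist)
    rw [← hVU]; exact this
  choose z hzU hzk using key
  apply Set.infinite_of_injective_forall_mem (f := z) _ hzU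
  intro a b hab
  have : (1:ℝ) / ((M + a + 1 : ℕ) : ℝ) = 1 / ((M + b + 1 : ℕ) : ℝ) := by
    rw [← hzk a, ← hzk b, hab]
  field_simp at this
  norm_cast at this
  omega

end CESAux

section Hyper
variable {X : Type*} [τ : TopologicalSpace X]

def vsub (X : Type*) [τ : TopologicalSpace X] : Set (Set (Set X)) :=
  {S : Set (Set X) | ∃ U : Set X, IsOpen[τ] U ∧ U.Nonempty ∧ S = {F : Set X | F ⊆ U}} ∪
  {S : Set (Set X) | ∃ U : Set X, IsOpen[τ] U ∧ U.Nonempty ∧ S = {F : Set X | (F ∩ U).Nonempty}}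

lemma sub_eq_of_eq {U U' : Set X} (h : {G : Set X | G ⊆ U} = {G : Set X | G ⊆ U'}) : U = U' := by
  apply subset_antisymm
  · exact (Set.ext_iff.mp h U).mp (subset_refl U)
  · exact (Set.ext_iff.mp h U').mpr (subset_refl U')

lemma hypFin_isOpen_ncard_gt [T2Space X] (n : ℕ) :
    IsOpen {F : HypFin X | n < F.val.ncard} := by
  classical
  rw [isOpen_iff_forall_mem_open]
  rintro F (hF : n < F.val.ncard)
  obtain ⟨t, htF, htcard⟩ := Set.exists_subset_card_eq (Nat.succ_le_of_lt hF)
  have htfin : t.Finite := F.prop.2.subset htF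
  obtain ⟨U, hU, hpd⟩ := htfin.t2_separation
  set N : Set (Set X) := ⋂ x ∈ t, {G : Set X | (G ∩ U x).Nonempty} with hN
  have hNopen : IsOpen[VietorisTop τ] N := by
    refine @Set.Finite.isOpen_biInter (Set X) X (VietorisTop τ) t _ htfin fun x hx => ?_
    exact TopologicalSpace.isOpen_generateFrom_of_mem
      (Or.inr ⟨U x, (hU x).2, ⟨x, (hU x).1⟩, rfl⟩)
  refine ⟨Subtype.val ⁻¹' N, ?_, isOpen_induced (t := VietorisTop τ) hNopen, ?_⟩
  · rintro G hG
    simp only [hN, Set.mem_preimage, Set.mem_iInter] at hG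
    set f : X → X := fun a => if h : (G.val ∩ U a).Nonempty then h.choose else a with hf
    have hfmem : ∀ a ∈ t, f a ∈ G.val ∩ U a := by
      intro a ha
      have h := Set.mem_iInter₂.mp (show G.val ∈ ⋂ x ∈ t, {G : Set X | (G ∩ U x).Nonempty} from hG) a ha
      have hfa : f a = h.choose := by rw [hf]; exact dif_pos h
      rw [hfa]; exact h.choose_spec
    have hinj : Set.InjOn f t := by
      intro a ha b hb hab
      by_contra hne
      have hd := hpd ha hb hne
      exact Set.disjoint_left.mp hd (hfmem a ha).2 (hab ▸ (hfmem b hb).2)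
    have := Set.ncard_le_ncard_of_injOn f (fun a ha => (hfmem a ha).1) hinj G.prop.2
    show n < G.val.ncard
    omega
  · simp only [hN, Set.mem_preimage, Set.mem_iInter]
    refine Set.mem_iInter₂.mpr fun x hx => ?_
    exact ⟨x, htF hx, (hU x).1⟩

lemma hypFin_dense_ncard_gt (hinf : ∀ U : Set X, IsOpen U → U.Nonempty → U.Infinite) (n : ℕ) :
    Dense {F : HypFin X | n < F.val.ncard} := by
  have hbasis := @TopologicalSpace.isTopologicalBasis_of_subbasis (Set X) (VietorisTop τ)
      (vsub X) rfl
  have hind : @Topology.IsInducing (HypFin X) (Set X) _ (VietorisTop τ)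
      (Subtype.val : HypFin X → Set X) :=
    @Topology.IsInducing.mk (HypFin X) (Set X) _ (VietorisTop τ) Subtype.val rfl
  have hbasis' := @TopologicalSpace.IsTopologicalBasis.isInducing (HypFin X) (Set X) _
      (VietorisTop τ) (Subtype.val : HypFin X → Set X) _ hind hbasis
  rw [hbasis'.dense_iff]
  rintro o ⟨b, ⟨ts, ⟨htsfin, htssub⟩, rfl⟩, rfl⟩ ⟨F, hFo⟩
  have hFts : F.val ∈ ⋂₀ ts := hFo
  set C : Set (Set X) := {U : Set X | IsOpen U ∧ {G : Set X | G ⊆ U} ∈ ts} with hC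
  have hCfin : C.Finite := by
    refine Set.Finite.subset
      (Set.Finite.preimage (f := fun U : Set X => {G : Set X | G ⊆ U})
        (fun a _ b _ h => sub_eq_of_eq h) htsfin) ?_
    intro U hU
    exact hU.2
  set V : Set X := ⋂₀ C with hV
  have hVopen : IsOpen V := hCfin.isOpen_sInter fun U hU => hU.1
  have hFV : F.val ⊆ V := by
    refine Set.subset_sInter fun U hU => ?_
    exact hFts _ hU.2
  have hVne : V.Nonempty := F.prop.1.mono hFV
  obtain ⟨s', hs'V, hs'fin, hs'card⟩ :=
    (hinf V hVopen hVne).exists_subset_ncard_eq (n + 1)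
  refine ⟨⟨F.val ∪ s', F.prop.1.inl, F.prop.2.union hs'fin⟩, ?_, ?_⟩
  · show (F.val ∪ s') ∈ ⋂₀ ts
    intro u hu
    rcases htssub hu with ⟨U, hUo, -, rfl⟩ | ⟨U, -, -, rfl⟩
    · have hFU : F.val ⊆ U := hFts _ hu
      have hsU : s' ⊆ U := hs'V.trans (Set.sInter_subset_of_mem ⟨hUo, hu⟩)
      exact Set.union_subset hFU hsU
    · have : (F.val ∩ U).Nonempty := hFts _ hu
      exact this.mono (Set.inter_subset_inter_left U Set.subset_union_left)
  · show n < (F.val ∪ s').ncard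
    have hle : s'.ncard ≤ (F.val ∪ s').ncard :=
      Set.ncard_le_ncard Set.subset_union_right (F.prop.2.union hs'fin)
    omega

end Hyper


/-- `F(𝔈_c)` is of the first category in itself, and consequently it is not homeomorphic
to complete Erdős space. -/
theorem hypFin_completeErdos_meager_and_not_homeomorph :
    IsMeagre (Set.univ : Set (HypFin CompleteErdosSpace)) ∧
    ¬ Nonempty (HypFin CompleteErdosSpace ≃ₜ CompleteErdosSpace) := by
  have hopen : ∀ n : ℕ, IsOpen {F : HypFin CompleteErdosSpace | n < F.val.ncard} :=
    fun n => hypFin_isOpen_ncard_gt n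
  have hdense : ∀ n : ℕ, Dense {F : HypFin CompleteErdosSpace | n < F.val.ncard} :=
    fun n => hypFin_dense_ncard_gt (fun U hU hne => ces_open_infinite hU hne) n
  have hres : ∀ n : ℕ,
      {F : HypFin CompleteErdosSpace | n < F.val.ncard} ∈ residual (HypFin CompleteErdosSpace) :=
    fun n => residual_of_dense_open (hopen n) (hdense n)
  constructor
  · rw [IsMeagre, Set.compl_univ]
    have hiInter : (∅ : Set (HypFin CompleteErdosSpace))
        = ⋂ n : ℕ, {F : HypFin CompleteErdosSpace | n < F.val.ncard} := by
      ext F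
      simp only [Set.mem_empty_iff_false, Set.mem_iInter, Set.mem_setOf_eq, false_iff,
        not_forall, not_lt]
      exact ⟨F.val.ncard, le_rfl⟩
    rw [hiInter]
    exact countable_iInter_mem.mpr hres
  · rintro ⟨e⟩
    have hres' : ∀ n : ℕ,
        e.symm ⁻¹' {F : HypFin CompleteErdosSpace | n < F.val.ncard}
          ∈ residual CompleteErdosSpace := by
      intro n
      refine residual_of_dense_open ((hopen n).preimage e.symm.continuous) ?_
      rw [dense_iff_closure_eq, ← Homeomorph.preimage_closure,
        dense_iff_closure_eq.mp (hdense n), Set.preimage_univ]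
    have hiInter : (∅ : Set CompleteErdosSpace)
        = ⋂ n : ℕ, e.symm ⁻¹' {F : HypFin CompleteErdosSpace | n < F.val.ncard} := by
      ext x
      simp only [Set.mem_empty_iff_false, Set.mem_iInter, Set.mem_preimage, Set.mem_setOf_eq,
        false_iff, not_forall, not_lt]
      exact ⟨(e.symm x).val.ncard, le_rfl⟩
    have h0 : (∅ : Set CompleteErdosSpace) ∈ residual CompleteErdosSpace := by
      rw [hiInter]
      exact countable_iInter_mem.mpr hres'
    have hd := dense_of_mem_residual h0
    exact absurd hd.nonempty (by simp)
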